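/- arXiv:1703.04689 — 3 statements merged into one kernel-verified Lean document; each statement's English description precedes it below -/
import Mathlib

section
/- For all m, n ≥ 0, the graded ℤ-linear map κ_{m,n} : C(m+1+n) → P(m,n), defined on a basis tuple (i₀ < … < i_p) in terms of r := card{k : 0 ≤ k ≤ p, i_k ≤ m} by κ_{m,n}(i₀,…,i_p) = (i₀,…,i_p) if r ≥ 2, κ_{m,n}(i₀,…,i_p) = (i₀,…,i_p) + (0,1)⊗(i₁,…,i_p) if r = 1 (the second term being 0 when p = 0), and κ_{m,n}(i₀,…,i_p) = (1)⊗(i₀,…,i_p) if r = 0, commutes with the differentials and the augmentations, i.e., is a morphism of augmented chain complexes of abelian groups. -/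
/-!
We represent the (augmented) normalized chain complex `C(N)` of the standard `N`-simplex by the
free abelian group on the finite subsets of `{0,…,N}`, a subset of cardinality `p+1` standing for
the strictly increasing `(p+1)`-tuple of its elements (a `p`-chain); the differential is the
alternating sum of the tuples obtained by deleting one entry (and vanishes on `0`-chains), and
the augmentation sends every `0`-chain basis element to `1` (and vanishes in higher degrees).
-/

noncomputable section

abbrev Ch (α : Type) := Finset α →₀ ℤ

/-- index of `a` in `s`: the number of smaller elements of `s`. -/
def idx {α : Type} [LinearOrder α] (s : Finset α) (a : α) : ℕ :=
  (s.filter (fun b => b < a)).card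

/-- value of the simplicial differential on a basis tuple:
`d(i₀,…,i_p) = Σₖ (−1)^k (i₀,…,î_k,…,i_p)` for `p ≥ 1`, and `0` on `0`-chains. -/
def dAux {α : Type} [LinearOrder α] (s : Finset α) : Ch α :=
  if 2 ≤ s.card then
    ∑ a ∈ s, ((-1 : ℤ) ^ (idx s a)) • Finsupp.single (s.erase a) (1 : ℤ)
  else 0

/-- the differential of `C(N)`. -/
def chD (α : Type) [LinearOrder α] : Ch α →ₗ[ℤ] Ch α :=
  Finsupp.lift _ ℤ _ dAux

/-- the augmentation of `C(N)`: `e(i₀) = 1` on `0`-chains, `0` in higher degrees. -/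
def chE (α : Type) : Ch α →ₗ[ℤ] ℤ :=
  Finsupp.lift _ ℤ _ (fun s => if s.card = 1 then (1 : ℤ) else 0)

/-- The chain map `c(ψ) : C(N') → C(N)` induced by a (monotone) map `ψ`,
`(i₀,…,i_p) ↦ (ψ(i₀),…,ψ(i_p))`, with the convention that a tuple with a repeated entry
denotes `0`. -/
def chMap {α β : Type} [DecidableEq β] (ψ : α → β) : Ch α →ₗ[ℤ] Ch β :=
  Finsupp.lift _ ℤ _ (fun s =>
    if (s.image ψ).card = s.card then Finsupp.single (s.image ψ) (1 : ℤ) else 0)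

/-- Basis indexing set for the pushout `P(m,n)`:
`inl s` is a plain tuple in `{0,…,m+1+n}`; `inr (a, t)` with `1 ∈ a ⊆ {0,1}` and
`t` a nonempty subset of `{0,…,n} ≅ {m+1,…,m+1+n}` represents the tensor basis element `a ⊗ t`
(`({1}, t) = (1)⊗t` and `({0,1}, t) = (0,1)⊗t`); the element `(0)⊗t` is identified with the
corresponding plain tuple. Other indices are spurious and irrelevant for the maps below. -/
abbrev PBs (m n : ℕ) := Finset (Fin (m+1+n+1)) ⊕ (Finset (Fin 2) × Finset (Fin (n+1)))

abbrev Pch (m n : ℕ) := PBs m n →₀ ℤ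

/-- the inclusion of `{0,…,n}` as `{m+1,…,m+1+n}` in `{0,…,m+1+n}`. -/
def pshift (m n : ℕ) : Fin (n+1) → Fin (m+1+n+1) :=
  fun j => ⟨m + 1 + (j : ℕ), by have := j.isLt; omega⟩

/-- the identification `{m+1,…,m+1+n} ≅ {0,…,n}` (sending `i` to `i − (m+1)`). -/
def punshift (m n : ℕ) : Fin (m+1+n+1) → Fin (n+1) :=
  fun i => ⟨(i : ℕ) - (m + 1), by have := i.isLt; omega⟩

/-- differential of `P(m,n)` on basis elements: `d` on plain tuples,
`d((1)⊗t) = (1)⊗d(t)`, and `d((0,1)⊗t) = (1)⊗t − ι(t) − (0,1)⊗d(t)`, where `ι(t)` is the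
plain tuple with entries in `{m+1,…,m+1+n}` corresponding to `t`. -/
def pdAux (m n : ℕ) : PBs m n → Pch m n
  | .inl s =>
      if 2 ≤ s.card then
        ∑ a ∈ s, ((-1 : ℤ) ^ (idx s a)) • Finsupp.single (Sum.inl (s.erase a) : PBs m n) (1 : ℤ)
      else 0
  | .inr p =>
      if p.1 = {1} then
        (if 2 ≤ p.2.card then
          ∑ b ∈ p.2, ((-1 : ℤ) ^ (idx p.2 b)) •
            Finsupp.single (Sum.inr (({1} : Finset (Fin 2)), p.2.erase b) : PBs m n) (1 : ℤ)
        else 0)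
      else if p.1 = {0, 1} ∧ p.2.Nonempty then
        Finsupp.single (Sum.inr (({1} : Finset (Fin 2)), p.2) : PBs m n) 1
        - Finsupp.single (Sum.inl (p.2.image (pshift m n)) : PBs m n) 1
        - (if 2 ≤ p.2.card then
            ∑ b ∈ p.2, ((-1 : ℤ) ^ (idx p.2 b)) •
              Finsupp.single (Sum.inr (({0, 1} : Finset (Fin 2)), p.2.erase b) : PBs m n) (1 : ℤ)
          else 0)
      else 0

/-- the differential of `P(m,n)`. -/
def pD (m n : ℕ) : Pch m n →ₗ[ℤ] Pch m n := Finsupp.lift _ ℤ _ (pdAux m n)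

/-- the augmentation of `P(m,n)`, extending that of `C(m+1+n)` by `e((1)⊗(i₀)) = 1`. -/
def pE (m n : ℕ) : Pch m n →ₗ[ℤ] ℤ :=
  Finsupp.lift _ ℤ _ (fun x => match x with
    | .inl s => if s.card = 1 then (1 : ℤ) else 0
    | .inr p => if p.1 = {1} ∧ p.2.card = 1 then (1 : ℤ) else 0)

/-- `κ_{m,n}` on a basis tuple `s`, in terms of `r := card {i ∈ s | i ≤ m}`:
`κ(s) = s` if `r ≥ 2`; `κ(s) = s + (0,1)⊗(i₁,…,i_p)` if `r = 1` (the second term being `0`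
when `p = 0`); `κ(s) = (1)⊗s` if `r = 0`. -/
def kapAux (m n : ℕ) (s : Finset (Fin (m+1+n+1))) : Pch m n :=
  if 2 ≤ (s.filter (fun i : Fin (m+1+n+1) => (i : ℕ) ≤ m)).card then
    Finsupp.single (Sum.inl s : PBs m n) 1
  else if (s.filter (fun i : Fin (m+1+n+1) => (i : ℕ) ≤ m)).card = 1 then
    Finsupp.single (Sum.inl s : PBs m n) 1 +
      (if (s.filter (fun i : Fin (m+1+n+1) => m < (i : ℕ))).Nonempty then
        Finsupp.single
          (Sum.inr (({0, 1} : Finset (Fin 2)),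
            (s.filter (fun i : Fin (m+1+n+1) => m < (i : ℕ))).image (punshift m n)) : PBs m n) 1
      else 0)
  else Finsupp.single (Sum.inr (({1} : Finset (Fin 2)), s.image (punshift m n)) : PBs m n) 1

/-- the graded `ℤ`-linear map `κ_{m,n} : C(m+1+n) → P(m,n)`. -/
def kap (m n : ℕ) : Ch (Fin (m+1+n+1)) →ₗ[ℤ] Pch m n := Finsupp.lift _ ℤ _ (kapAux m n)


section KapMorphismProof

open Finset

private lemma liftZ_single {X M : Type} [AddCommGroup M] [Module ℤ M] (f : X → M) (x : X) :
    (Finsupp.lift M ℤ X f) (Finsupp.single x (1 : ℤ)) = f x := by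
  have h1 : ((Finsupp.lift M ℤ X).symm ((Finsupp.lift M ℤ X) f)) x
      = ((Finsupp.lift M ℤ X) f) (Finsupp.single x 1) :=
    Finsupp.lift_symm_apply _ _ _ _ _
  have h2 : (Finsupp.lift M ℤ X).symm ((Finsupp.lift M ℤ X) f) = f :=
    AddEquiv.symm_apply_apply _ f
  rw [← h1, h2]

private lemma kap_single (m n : ℕ) (s : Finset (Fin (m+1+n+1))) :
    kap m n (Finsupp.single s 1) = kapAux m n s := liftZ_single _ _

private lemma pD_single (m n : ℕ) (x : PBs m n) :
    pD m n (Finsupp.single x 1) = pdAux m n x := liftZ_single _ _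

private lemma pE_single_inl (m n : ℕ) (s : Finset (Fin (m+1+n+1))) :
    pE m n (Finsupp.single (Sum.inl s : PBs m n) 1) = if s.card = 1 then (1:ℤ) else 0 :=
  liftZ_single _ _

private lemma pE_single_inr (m n : ℕ) (p : Finset (Fin 2) × Finset (Fin (n+1))) :
    pE m n (Finsupp.single (Sum.inr p : PBs m n) 1) =
      if p.1 = {1} ∧ p.2.card = 1 then (1:ℤ) else 0 :=
  liftZ_single _ _

private lemma punshift_lt (m n : ℕ) {x y : Fin (m+1+n+1)} (hx : m < (x:ℕ)) (hy : m < (y:ℕ)) :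
    punshift m n x < punshift m n y ↔ x < y := by
  simp only [punshift, Fin.lt_def]
  omega

private lemma punshift_inj (m n : ℕ) {x y : Fin (m+1+n+1)} (hx : m < (x:ℕ)) (hy : m < (y:ℕ))
    (h : punshift m n x = punshift m n y) : x = y := by
  have h' : (x:ℕ) - (m+1) = (y:ℕ) - (m+1) := congrArg Fin.val h
  exact Fin.ext (by omega)

private lemma image_erase_injOn {α β : Type} [DecidableEq α] [DecidableEq β]
    {f : α → β} {s : Finset α} (hf : ∀ x ∈ s, ∀ y ∈ s, f x = f y → x = y)
    {a : α} (ha : a ∈ s) :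
    (s.erase a).image f = (s.image f).erase (f a) := by
  ext b
  simp only [mem_image, mem_erase]
  constructor
  · rintro ⟨x, ⟨hxa, hxs⟩, rfl⟩
    exact ⟨fun h => hxa (hf x hxs a ha h), x, hxs, rfl⟩
  · rintro ⟨hb, x, hxs, rfl⟩
    exact ⟨x, ⟨fun h => hb (by rw [h]), hxs⟩, rfl⟩

private lemma idx_image {α β : Type} [LinearOrder α] [LinearOrder β] [DecidableEq β]
    {f : α → β} {s : Finset α}
    (hmono : ∀ x ∈ s, ∀ y ∈ s, (f x < f y ↔ x < y)) {a : α} (ha : a ∈ s) :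
    idx (s.image f) (f a) = idx s a := by
  unfold idx
  rw [Finset.filter_image]
  rw [Finset.filter_congr (fun x hx => by exact hmono x hx a ha)]
  apply Finset.card_image_of_injOn
  intro x hx y hy hxy
  simp only [coe_filter, Set.mem_setOf_eq] at hx hy
  rcases lt_trichotomy x y with h | h | h
  · exact absurd hxy (ne_of_lt ((hmono x hx.1 y hy.1).2 h))
  · exact h
  · exact absurd hxy.symm (ne_of_lt ((hmono y hy.1 x hx.1).2 h))

private lemma filter_not_le (m n : ℕ) (s : Finset (Fin (m+1+n+1))) :
    (s.filter (fun i : Fin (m+1+n+1) => ¬ ((i:ℕ) ≤ m))) =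
      s.filter (fun i : Fin (m+1+n+1) => m < (i:ℕ)) :=
  Finset.filter_congr (fun x _ => by simp)

private lemma LR_card (m n : ℕ) (s : Finset (Fin (m+1+n+1))) :
    (s.filter (fun i : Fin (m+1+n+1) => (i:ℕ) ≤ m)).card +
      (s.filter (fun i : Fin (m+1+n+1) => m < (i:ℕ))).card = s.card := by
  rw [← filter_not_le m n s]
  exact Finset.card_filter_add_card_filter_not _

private lemma filterR_all (m n : ℕ) (s : Finset (Fin (m+1+n+1))) :
    ∀ a ∈ s.filter (fun i : Fin (m+1+n+1) => m < (i:ℕ)), m < (a:ℕ) :=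
  fun a ha => (Finset.mem_filter.1 ha).2

private lemma idx_eq_of_le (m n : ℕ) {s : Finset (Fin (m+1+n+1))} {a : Fin (m+1+n+1)}
    (ham : (a:ℕ) ≤ m) :
    idx s a = idx (s.filter (fun i : Fin (m+1+n+1) => (i:ℕ) ≤ m)) a := by
  unfold idx
  rw [Finset.filter_filter]
  exact congrArg Finset.card (Finset.filter_congr (fun x _ => by
    simp only [Fin.lt_def]; omega))

private lemma idx_eq_of_gt (m n : ℕ) {s : Finset (Fin (m+1+n+1))} {a : Fin (m+1+n+1)}
    (ham : m < (a:ℕ)) :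
    idx s a = (s.filter (fun i : Fin (m+1+n+1) => (i:ℕ) ≤ m)).card +
      idx (s.filter (fun i : Fin (m+1+n+1) => m < (i:ℕ))) a := by
  unfold idx
  rw [Finset.filter_filter,
    ← Finset.card_filter_add_card_filter_not
      (p := fun i : Fin (m+1+n+1) => (i:ℕ) ≤ m) (s := s.filter (fun b => b < a)),
    Finset.filter_filter, Finset.filter_filter]
  congr 1
  · exact congrArg Finset.card (Finset.filter_congr (fun x _ => by
      simp only [Fin.lt_def]; omega))
  · exact congrArg Finset.card (Finset.filter_congr (fun x _ => by
      simp only [Fin.lt_def]; omega))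

private lemma sum_sign_pair {α : Type} [LinearOrder α] {L : Finset α} (h : L.card = 2) :
    ∑ a ∈ L, ((-1:ℤ)^(idx L a)) = 0 := by
  obtain ⟨x, y, hxy, rfl⟩ := Finset.card_eq_two.1 h
  have key : ∀ u v : α, u < v → ∑ a ∈ ({u, v} : Finset α), ((-1:ℤ)^(idx ({u, v} : Finset α) a)) = 0 := by
    intro u v huv
    rw [Finset.sum_pair huv.ne]
    have h1 : idx ({u, v} : Finset α) u = 0 := by
      unfold idx
      rw [Finset.filter_insert, if_neg (lt_irrefl u), Finset.filter_singleton,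
        if_neg (asymm huv)]
      exact Finset.card_empty
    have h2 : idx ({u, v} : Finset α) v = 1 := by
      unfold idx
      rw [Finset.filter_insert, if_pos huv, Finset.filter_singleton, if_neg (lt_irrefl v)]
      simp
    rw [h1, h2]; ring
  rcases hxy.lt_or_gt with h | h
  · exact key x y h
  · rw [Finset.pair_comm]; exact key y x h

private lemma kapAux_two (m n : ℕ) {s : Finset (Fin (m+1+n+1))}
    (h : 2 ≤ (s.filter (fun i : Fin (m+1+n+1) => (i:ℕ) ≤ m)).card) :
    kapAux m n s = Finsupp.single (Sum.inl s : PBs m n) 1 := by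
  rw [kapAux, if_pos h]

private lemma kapAux_one (m n : ℕ) {s : Finset (Fin (m+1+n+1))}
    (h : (s.filter (fun i : Fin (m+1+n+1) => (i:ℕ) ≤ m)).card = 1) :
    kapAux m n s = Finsupp.single (Sum.inl s : PBs m n) 1 +
      (if (s.filter (fun i : Fin (m+1+n+1) => m < (i : ℕ))).Nonempty then
        Finsupp.single
          (Sum.inr (({0, 1} : Finset (Fin 2)),
            (s.filter (fun i : Fin (m+1+n+1) => m < (i : ℕ))).image (punshift m n)) : PBs m n) 1
      else 0) := by
  rw [kapAux, if_neg (by omega), if_pos h]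

private lemma kapAux_zero (m n : ℕ) {s : Finset (Fin (m+1+n+1))}
    (h : (s.filter (fun i : Fin (m+1+n+1) => (i:ℕ) ≤ m)).card = 0) :
    kapAux m n s = Finsupp.single
      (Sum.inr (({1} : Finset (Fin 2)), s.image (punshift m n)) : PBs m n) 1 := by
  rw [kapAux, if_neg (by omega), if_neg (by omega)]

private lemma pdAux_inl (m n : ℕ) (s : Finset (Fin (m+1+n+1))) :
    pdAux m n (Sum.inl s) =
      if 2 ≤ s.card then
        ∑ a ∈ s, ((-1 : ℤ) ^ (idx s a)) • Finsupp.single (Sum.inl (s.erase a) : PBs m n) (1 : ℤ)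
      else 0 := rfl

private lemma pdAux_one (m n : ℕ) (t : Finset (Fin (n+1))) :
    pdAux m n (Sum.inr (({1} : Finset (Fin 2)), t)) =
      if 2 ≤ t.card then
        ∑ b ∈ t, ((-1 : ℤ) ^ (idx t b)) •
          Finsupp.single (Sum.inr (({1} : Finset (Fin 2)), t.erase b) : PBs m n) (1 : ℤ)
      else 0 := by
  simp only [pdAux]
  rw [if_pos trivial]

private lemma pdAux_zeroone (m n : ℕ) (t : Finset (Fin (n+1))) (ht : t.Nonempty) :
    pdAux m n (Sum.inr (({0, 1} : Finset (Fin 2)), t)) =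
      Finsupp.single (Sum.inr (({1} : Finset (Fin 2)), t) : PBs m n) 1
      - Finsupp.single (Sum.inl (t.image (pshift m n)) : PBs m n) 1
      - (if 2 ≤ t.card then
          ∑ b ∈ t, ((-1 : ℤ) ^ (idx t b)) •
            Finsupp.single (Sum.inr (({0, 1} : Finset (Fin 2)), t.erase b) : PBs m n) (1 : ℤ)
        else 0) := by
  have h01 : ¬ (({0, 1} : Finset (Fin 2)) = {1}) := by decide
  simp only [pdAux]
  rw [if_neg h01, if_pos (show True ∧ t.Nonempty from ⟨trivial, ht⟩)]

private lemma image_pshift_punshift (m n : ℕ) {R : Finset (Fin (m+1+n+1))}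
    (hR : ∀ a ∈ R, m < (a:ℕ)) :
    (R.image (punshift m n)).image (pshift m n) = R := by
  rw [Finset.image_image]
  have h : ∀ a ∈ R, (pshift m n ∘ punshift m n) a = id a := by
    intro a ha
    have := hR a ha
    exact Fin.ext (by show m + 1 + ((a:ℕ) - (m+1)) = (a:ℕ); omega)
  rw [Finset.image_congr h, Finset.image_id]

private lemma erase_eq_filterR (m n : ℕ) {s : Finset (Fin (m+1+n+1))} {a0 : Fin (m+1+n+1)}
    (hL : s.filter (fun i : Fin (m+1+n+1) => (i:ℕ) ≤ m) = {a0}) :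
    s.erase a0 = s.filter (fun i : Fin (m+1+n+1) => m < (i:ℕ)) := by
  have ha0m : (a0:ℕ) ≤ m := by
    have h0 : a0 ∈ ({a0} : Finset (Fin (m+1+n+1))) := Finset.mem_singleton_self a0
    rw [← hL] at h0
    exact (Finset.mem_filter.1 h0).2
  ext b
  simp only [mem_erase, mem_filter]
  constructor
  · rintro ⟨hba, hbs⟩
    refine ⟨hbs, ?_⟩
    by_contra h
    have hb : b ∈ s.filter (fun i : Fin (m+1+n+1) => (i:ℕ) ≤ m) :=
      Finset.mem_filter.2 ⟨hbs, by omega⟩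
    rw [hL, Finset.mem_singleton] at hb
    exact hba hb
  · rintro ⟨hbs, hb⟩
    exact ⟨fun h => by subst h; omega, hbs⟩

private lemma idx_a0 (m n : ℕ) {s : Finset (Fin (m+1+n+1))} {a0 : Fin (m+1+n+1)}
    (hL : s.filter (fun i : Fin (m+1+n+1) => (i:ℕ) ≤ m) = {a0}) :
    idx s a0 = 0 := by
  have ha0m : (a0:ℕ) ≤ m := by
    have h0 : a0 ∈ ({a0} : Finset (Fin (m+1+n+1))) := Finset.mem_singleton_self a0
    rw [← hL] at h0
    exact (Finset.mem_filter.1 h0).2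
  rw [idx_eq_of_le m n ha0m, hL]
  unfold idx
  rw [Finset.filter_singleton, if_neg (lt_irrefl a0)]
  exact Finset.card_empty

end KapMorphismProof

private lemma chD_single (N : ℕ) (s : Finset (Fin (N+1))) :
    chD (Fin (N+1)) (Finsupp.single s 1) = dAux s := liftZ_single _ _

private lemma chE_single (N : ℕ) (s : Finset (Fin (N+1))) :
    chE (Fin (N+1)) (Finsupp.single s 1) = (if s.card = 1 then (1:ℤ) else 0) := liftZ_single _ _

private lemma punshift_card (m n : ℕ) {R : Finset (Fin (m+1+n+1))}
    (hR : ∀ a ∈ R, m < (a:ℕ)) : (R.image (punshift m n)).card = R.card :=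
  Finset.card_image_of_injOn (fun x hx y hy h => punshift_inj m n (hR x hx) (hR y hy) h)

private lemma key2 (m n : ℕ) (s : Finset (Fin (m+1+n+1))) :
    pE m n (kapAux m n s) = (if s.card = 1 then (1:ℤ) else 0) := by
  by_cases hL2 : 2 ≤ (s.filter (fun i : Fin (m+1+n+1) => (i:ℕ) ≤ m)).card
  · rw [kapAux_two m n hL2, pE_single_inl]
  by_cases hL1 : (s.filter (fun i : Fin (m+1+n+1) => (i:ℕ) ≤ m)).card = 1
  · rw [kapAux_one m n hL1, map_add, pE_single_inl]
    by_cases hRne : (s.filter (fun i : Fin (m+1+n+1) => m < (i:ℕ))).Nonempty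
    · rw [if_pos hRne, pE_single_inr]
      have hcond : ¬((((({0, 1} : Finset (Fin 2)),
          (s.filter (fun i : Fin (m+1+n+1) => m < (i : ℕ))).image (punshift m n))) :
            Finset (Fin 2) × Finset (Fin (n+1))).1 = {1} ∧
          (((({0, 1} : Finset (Fin 2)),
          (s.filter (fun i : Fin (m+1+n+1) => m < (i : ℕ))).image (punshift m n))) :
            Finset (Fin 2) × Finset (Fin (n+1))).2.card = 1) :=
        fun h => absurd h.1 (show ¬(({0, 1} : Finset (Fin 2)) = {1}) by decide)
      rw [if_neg hcond, add_zero]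
    · rw [if_neg hRne, map_zero, add_zero]
  · have hL0 : (s.filter (fun i : Fin (m+1+n+1) => (i:ℕ) ≤ m)).card = 0 := by omega
    have hall : ∀ a ∈ s, m < (a:ℕ) := by
      intro a ha
      by_contra h
      have : a ∈ s.filter (fun i : Fin (m+1+n+1) => (i:ℕ) ≤ m) :=
        Finset.mem_filter.2 ⟨ha, by omega⟩
      rw [Finset.card_eq_zero.1 hL0] at this
      exact absurd this (Finset.notMem_empty a)
    rw [kapAux_zero m n hL0, pE_single_inr]
    have hc : (s.image (punshift m n)).card = s.card := punshift_card m n hall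
    by_cases h1 : s.card = 1
    · rw [if_pos (show _ ∧ _ from ⟨rfl, by show (s.image (punshift m n)).card = 1; omega⟩),
        if_pos h1]
    · rw [if_neg (show ¬(_ ∧ _) from fun hcon => h1 (by
        have h2 : (s.image (punshift m n)).card = 1 := hcon.2
        omega)), if_neg h1]

private lemma sum_split {β : Type} [AddCommMonoid β] (m n : ℕ) (s : Finset (Fin (m+1+n+1)))
    (f : Fin (m+1+n+1) → β) :
    ∑ a ∈ s, f a = (∑ a ∈ s.filter (fun i : Fin (m+1+n+1) => (i:ℕ) ≤ m), f a) +
      ∑ a ∈ s.filter (fun i : Fin (m+1+n+1) => m < (i:ℕ)), f a := by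
  rw [← filter_not_le m n s]
  exact (Finset.sum_filter_add_sum_filter_not s _ f).symm

private lemma hD_lemma (m n : ℕ) (R : Finset (Fin (m+1+n+1))) (hR : ∀ a ∈ R, m < (a:ℕ)) :
    ∑ a ∈ R, (-((-1:ℤ)^(idx R a))) •
      (if (R.erase a).Nonempty then
        Finsupp.single (Sum.inr (({0, 1} : Finset (Fin 2)),
          (R.erase a).image (punshift m n)) : PBs m n) (1:ℤ)
      else 0)
    = -(if 2 ≤ (R.image (punshift m n)).card then
        ∑ b ∈ R.image (punshift m n), ((-1:ℤ)^(idx (R.image (punshift m n)) b)) •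
          Finsupp.single (Sum.inr (({0, 1} : Finset (Fin 2)),
            (R.image (punshift m n)).erase b) : PBs m n) (1:ℤ)
      else 0) := by
  have hinj : ∀ x ∈ R, ∀ y ∈ R, punshift m n x = punshift m n y → x = y :=
    fun x hx y hy h => punshift_inj m n (hR x hx) (hR y hy) h
  have hcard : (R.image (punshift m n)).card = R.card := punshift_card m n hR
  by_cases hR2 : 2 ≤ R.card
  · rw [if_pos (by omega : 2 ≤ (R.image (punshift m n)).card)]
    rw [Finset.sum_image hinj, ← Finset.sum_neg_distrib]
    refine Finset.sum_congr rfl fun a ha => ?_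
    have hne : (R.erase a).Nonempty := by
      rw [← Finset.card_pos, Finset.card_erase_of_mem ha]
      omega
    have hmono : ∀ x ∈ R, ∀ y ∈ R, (punshift m n x < punshift m n y ↔ x < y) :=
      fun x hx y hy => punshift_lt m n (hR x hx) (hR y hy)
    rw [if_pos hne, image_erase_injOn hinj ha, idx_image hmono ha, neg_smul]
  · rw [if_neg (by omega : ¬ 2 ≤ (R.image (punshift m n)).card), neg_zero]
    refine Finset.sum_eq_zero fun a ha => ?_
    have hne : ¬ (R.erase a).Nonempty := by
      rw [← Finset.card_pos, Finset.card_erase_of_mem ha]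
      have := Finset.card_pos.2 ⟨a, ha⟩
      omega
    rw [if_neg hne, smul_zero]

private lemma key (m n : ℕ) (s : Finset (Fin (m+1+n+1))) :
    pD m n (kapAux m n s) = kap m n (dAux s) := by
  have hRHS : 2 ≤ s.card → kap m n (dAux s) =
      ∑ a ∈ s, ((-1:ℤ)^(idx s a)) • kapAux m n (s.erase a) := by
    intro h2
    rw [dAux, if_pos h2, map_sum]
    simp only [map_smul, kap_single]
  have hRHS0 : ¬ 2 ≤ s.card → kap m n (dAux s) = 0 := fun h2 => by
    rw [dAux, if_neg h2, map_zero]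
  by_cases hL2 : 2 ≤ (s.filter (fun i : Fin (m+1+n+1) => (i:ℕ) ≤ m)).card
  · -- case r ≥ 2
    have hs2 : 2 ≤ s.card := le_trans hL2 (Finset.card_filter_le _ _)
    rw [kapAux_two m n hL2, pD_single, pdAux_inl, if_pos hs2, hRHS hs2]
    by_cases hL3 : 3 ≤ (s.filter (fun i : Fin (m+1+n+1) => (i:ℕ) ≤ m)).card
    · refine Finset.sum_congr rfl fun a _ => ?_
      have h2' : 2 ≤ ((s.erase a).filter (fun i : Fin (m+1+n+1) => (i:ℕ) ≤ m)).card := by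
        rw [Finset.filter_erase]
        have hle := Finset.pred_card_le_card_erase
          (s := s.filter (fun i : Fin (m+1+n+1) => (i:ℕ) ≤ m)) (a := a)
        omega
      rw [kapAux_two m n h2']
    · have hL2' : (s.filter (fun i : Fin (m+1+n+1) => (i:ℕ) ≤ m)).card = 2 := by omega
      rw [sum_split m n s
          (fun a => ((-1:ℤ)^(idx s a)) • Finsupp.single (Sum.inl (s.erase a) : PBs m n) (1:ℤ)),
        sum_split m n s (fun a => ((-1:ℤ)^(idx s a)) • kapAux m n (s.erase a))]
      congr 1
      · -- sums over L
        have hX' : ∀ a ∈ s.filter (fun i : Fin (m+1+n+1) => (i:ℕ) ≤ m),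
            ((-1:ℤ)^(idx s a)) • kapAux m n (s.erase a)
            = ((-1:ℤ)^(idx s a)) • Finsupp.single (Sum.inl (s.erase a) : PBs m n) (1:ℤ)
              + ((-1:ℤ)^(idx s a)) •
                (if (s.filter (fun i : Fin (m+1+n+1) => m < (i:ℕ))).Nonempty then
                  Finsupp.single (Sum.inr (({0, 1} : Finset (Fin 2)),
                    (s.filter (fun i : Fin (m+1+n+1) => m < (i:ℕ))).image (punshift m n)) :
                      PBs m n) (1:ℤ)
                else 0) := by
          intro a ha
          have ham := (Finset.mem_filter.1 ha).2
          have h1 : ((s.erase a).filter (fun i : Fin (m+1+n+1) => (i:ℕ) ≤ m)).card = 1 := by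
            rw [Finset.filter_erase, Finset.card_erase_of_mem ha, hL2']
          rw [kapAux_one m n h1, Finset.filter_erase,
            Finset.erase_eq_of_notMem
              (fun hmem => absurd (Finset.mem_filter.1 hmem).2 (by omega)), smul_add]
        have hsign : ∑ a ∈ s.filter (fun i : Fin (m+1+n+1) => (i:ℕ) ≤ m),
            ((-1:ℤ)^(idx s a)) = 0 := by
          rw [Finset.sum_congr rfl (fun a ha => by
            rw [idx_eq_of_le m n (Finset.mem_filter.1 ha).2])]
          exact sum_sign_pair hL2'
        rw [Finset.sum_congr rfl hX', Finset.sum_add_distrib, ← Finset.sum_smul, hsign,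
          zero_smul, add_zero]
      · -- sums over R
        refine Finset.sum_congr rfl fun a ha => ?_
        have ham := (Finset.mem_filter.1 ha).2
        have h2' : 2 ≤ ((s.erase a).filter (fun i : Fin (m+1+n+1) => (i:ℕ) ≤ m)).card := by
          rw [Finset.filter_erase, Finset.erase_eq_of_notMem
            (fun hmem => absurd (Finset.mem_filter.1 hmem).2 (by omega))]
          omega
        rw [kapAux_two m n h2']
  by_cases hL1 : (s.filter (fun i : Fin (m+1+n+1) => (i:ℕ) ≤ m)).card = 1
  · -- case r = 1
    obtain ⟨a0, hLa0⟩ := Finset.card_eq_one.1 hL1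
    have ha0L : a0 ∈ s.filter (fun i : Fin (m+1+n+1) => (i:ℕ) ≤ m) := by
      rw [hLa0]; exact Finset.mem_singleton_self a0
    have ha0s : a0 ∈ s := (Finset.mem_filter.1 ha0L).1
    have ha0m : (a0:ℕ) ≤ m := (Finset.mem_filter.1 ha0L).2
    have hEr : s.erase a0 = s.filter (fun i : Fin (m+1+n+1) => m < (i:ℕ)) :=
      erase_eq_filterR m n hLa0
    have hidx0 : idx s a0 = 0 := idx_a0 m n hLa0
    have hcard := LR_card m n s
    rw [kapAux_one m n hL1]
    by_cases hRne : (s.filter (fun i : Fin (m+1+n+1) => m < (i:ℕ))).Nonempty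
    · have hR1 : 1 ≤ (s.filter (fun i : Fin (m+1+n+1) => m < (i:ℕ))).card :=
        Finset.card_pos.2 hRne
      have hs2 : 2 ≤ s.card := by omega
      have hRall := filterR_all m n s
      have hRL0 : ((s.filter (fun i : Fin (m+1+n+1) => m < (i:ℕ))).filter
          (fun i : Fin (m+1+n+1) => (i:ℕ) ≤ m)).card = 0 := by
        rw [Finset.card_eq_zero]
        exact Finset.filter_false_of_mem (fun x hx => by
          have := (Finset.mem_filter.1 hx).2; omega)
      have hYa : ∀ a ∈ s.filter (fun i : Fin (m+1+n+1) => m < (i:ℕ)),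
          ((-1:ℤ)^(idx s a)) • kapAux m n (s.erase a)
          = ((-1:ℤ)^(idx s a)) • Finsupp.single (Sum.inl (s.erase a) : PBs m n) (1:ℤ)
            + (-((-1:ℤ)^(idx (s.filter (fun i : Fin (m+1+n+1) => m < (i:ℕ))) a))) •
              (if ((s.filter (fun i : Fin (m+1+n+1) => m < (i:ℕ))).erase a).Nonempty then
                Finsupp.single (Sum.inr (({0, 1} : Finset (Fin 2)),
                  ((s.filter (fun i : Fin (m+1+n+1) => m < (i:ℕ))).erase a).image
                    (punshift m n)) : PBs m n) (1:ℤ)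
              else 0) := by
        intro a ha
        have ham := (Finset.mem_filter.1 ha).2
        have h1 : ((s.erase a).filter (fun i : Fin (m+1+n+1) => (i:ℕ) ≤ m)).card = 1 := by
          rw [Finset.filter_erase, Finset.erase_eq_of_notMem
            (fun hmem => absurd (Finset.mem_filter.1 hmem).2 (by omega))]
          exact hL1
        rw [kapAux_one m n h1, Finset.filter_erase, smul_add]
        congr 1
        rw [idx_eq_of_gt m n ham, hL1, pow_add, pow_one, neg_one_mul]
      rw [if_pos hRne, map_add, pD_single, pD_single, pdAux_inl, if_pos hs2,
        pdAux_zeroone m n _ (hRne.image _),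
        image_pshift_punshift m n hRall, hRHS hs2,
        sum_split m n s
          (fun a => ((-1:ℤ)^(idx s a)) • Finsupp.single (Sum.inl (s.erase a) : PBs m n) (1:ℤ)),
        sum_split m n s (fun a => ((-1:ℤ)^(idx s a)) • kapAux m n (s.erase a)),
        hLa0, Finset.sum_singleton, Finset.sum_singleton, hidx0, pow_zero, one_smul, one_smul,
        hEr, kapAux_zero m n hRL0,
        Finset.sum_congr rfl hYa, Finset.sum_add_distrib,
        hD_lemma m n _ hRall]
      abel
    · have hR0 : (s.filter (fun i : Fin (m+1+n+1) => m < (i:ℕ))).card = 0 := by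
        rw [Finset.card_eq_zero]
        exact Finset.not_nonempty_iff_eq_empty.1 hRne
      rw [if_neg hRne, add_zero, pD_single, pdAux_inl,
        if_neg (by omega : ¬ 2 ≤ s.card), hRHS0 (by omega)]
  · -- case r = 0
    have hL0 : (s.filter (fun i : Fin (m+1+n+1) => (i:ℕ) ≤ m)).card = 0 := by omega
    have hLempty : s.filter (fun i : Fin (m+1+n+1) => (i:ℕ) ≤ m) = ∅ :=
      Finset.card_eq_zero.1 hL0
    have hall : ∀ a ∈ s, m < (a:ℕ) := by
      intro a ha
      by_contra h
      have : a ∈ s.filter (fun i : Fin (m+1+n+1) => (i:ℕ) ≤ m) :=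
        Finset.mem_filter.2 ⟨ha, by omega⟩
      rw [hLempty] at this
      exact absurd this (Finset.notMem_empty a)
    have hinj : ∀ x ∈ s, ∀ y ∈ s, punshift m n x = punshift m n y → x = y :=
      fun x hx y hy h => punshift_inj m n (hall x hx) (hall y hy) h
    have hmono : ∀ x ∈ s, ∀ y ∈ s, (punshift m n x < punshift m n y ↔ x < y) :=
      fun x hx y hy => punshift_lt m n (hall x hx) (hall y hy)
    have hcardim : (s.image (punshift m n)).card = s.card := punshift_card m n hall
    rw [kapAux_zero m n hL0, pD_single, pdAux_one]
    by_cases hs2 : 2 ≤ s.card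
    · rw [if_pos (by omega : 2 ≤ (s.image (punshift m n)).card), hRHS hs2,
        Finset.sum_image hinj]
      refine Finset.sum_congr rfl fun a ha => ?_
      have h0 : ((s.erase a).filter (fun i : Fin (m+1+n+1) => (i:ℕ) ≤ m)).card = 0 := by
        rw [Finset.filter_erase, hLempty, Finset.erase_empty, Finset.card_empty]
      rw [kapAux_zero m n h0, image_erase_injOn hinj ha, idx_image hmono ha]
    · rw [if_neg (by omega : ¬ 2 ≤ (s.image (punshift m n)).card), hRHS0 hs2]

/-- `κ_{m,n} : C(m+1+n) → P(m,n)` commutes with the differentials and the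
augmentations, i.e. it is a morphism of augmented chain complexes of abelian groups. -/
theorem kap_chain_complex_morphism (m n : ℕ) :
    (pD m n).comp (kap m n) = (kap m n).comp (chD (Fin (m+1+n+1))) ∧
    (pE m n).comp (kap m n) = chE (Fin (m+1+n+1)) := by
  constructor
  · apply Finsupp.lhom_ext'
    intro s
    apply LinearMap.ext_ring
    simp only [LinearMap.coe_comp, Function.comp_apply, Finsupp.lsingle_apply]
    rw [kap_single, chD_single, key]
  · apply Finsupp.lhom_ext'
    intro s
    apply LinearMap.ext_ring
    simp only [LinearMap.coe_comp, Function.comp_apply, Finsupp.lsingle_apply]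
    rw [kap_single, chE_single, key2]

end
end

section
/- For all monotone maps φ : [m'] → [m] and ψ : [n'] → [n], one has P(φ,ψ) ∘ κ_{m',n'} = κ_{m,n} ∘ c(φ⊔ψ) as maps C(m'+1+n') → P(m,n), where P(φ,ψ) : P(m',n') → P(m,n) is the chain map induced on the pushouts by c(φ⊔ψ) : C(m'+1+n') → C(m+1+n) and id_{C(1)} ⊗ c(ψ) : C(1)⊗C(n') → C(1)⊗C(n). -/
/-!
We represent the (augmented) normalized chain complex `C(N)` of the standard `N`-simplex by the
free abelian group on the finite subsets of `{0,…,N}`, a subset of cardinality `p+1` standing for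
the strictly increasing `(p+1)`-tuple of its elements (a `p`-chain); the differential is the
alternating sum of the tuples obtained by deleting one entry (and vanishes on `0`-chains), and
the augmentation sends every `0`-chain basis element to `1` (and vanishes in higher degrees).
-/

noncomputable section

/-- the join `φ ⊔ ψ : [m'+1+n'] → [m+1+n]` of two maps, sending `i` to `φ(i)` for `i ≤ m'`
and to `m+1+ψ(i−1−m')` for `i ≥ m'+1`. -/
def joinFun {m' m n' n : ℕ} (φ : Fin (m'+1) → Fin (m+1)) (ψ : Fin (n'+1) → Fin (n+1)) :
    Fin (m'+1+n'+1) → Fin (m+1+n+1) := fun i =>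
  if h : (i : ℕ) ≤ m' then Fin.castLE (by omega) (φ ⟨(i : ℕ), by omega⟩)
  else
    have h2 : (i : ℕ) - (m' + 1) < n' + 1 := by have := i.isLt; omega
    Fin.castLE (by omega) (Fin.natAdd (m+1) (ψ ⟨(i : ℕ) - (m' + 1), h2⟩))

/-- the map `P(φ,ψ) : P(m',n') → P(m,n)` induced on the pushouts by `c(φ⊔ψ)` on plain tuples
and by `id_{C(1)} ⊗ c(ψ)` on the tensor part. -/
def pMap {m' m n' n : ℕ} (φ : Fin (m'+1) → Fin (m+1)) (ψ : Fin (n'+1) → Fin (n+1)) :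
    Pch m' n' →ₗ[ℤ] Pch m n :=
  Finsupp.lift _ ℤ _ (fun x => match x with
    | .inl s =>
        if (s.image (joinFun φ ψ)).card = s.card then
          Finsupp.single (Sum.inl (s.image (joinFun φ ψ)) : PBs m n) (1 : ℤ)
        else 0
    | .inr p =>
        if (p.2.image ψ).card = p.2.card then
          Finsupp.single (Sum.inr (p.1, p.2.image ψ) : PBs m n) (1 : ℤ)
        else 0)


lemma lift_single {α β : Type} (f : α → (β →₀ ℤ)) (x : α) (c : ℤ) :
    Finsupp.lift (β →₀ ℤ) ℤ α f (Finsupp.single x c) = c • f x := by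
  rw [show (Finsupp.single x c : α →₀ ℤ) = c • Finsupp.single x 1 by
        rw [Finsupp.smul_single, smul_eq_mul, mul_one], LinearMap.map_smul]
  have h := Finsupp.lift_symm_apply (M := (β →₀ ℤ)) (R := ℤ) (X := α)
    (Finsupp.lift (β →₀ ℤ) ℤ α f) x
  rw [AddEquiv.symm_apply_apply] at h
  rw [← h]

lemma joinFun_le_iff {m' m n' n : ℕ} (φ : Fin (m'+1) → Fin (m+1)) (ψ : Fin (n'+1) → Fin (n+1))
    (i : Fin (m'+1+n'+1)) : ((joinFun φ ψ i : ℕ) ≤ m) ↔ (i : ℕ) ≤ m' := by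
  unfold joinFun
  by_cases h : (i : ℕ) ≤ m'
  · simp only [dif_pos h, Fin.coe_castLE]
    exact iff_of_true (Fin.is_le _) h
  · simp only [dif_neg h, Fin.coe_castLE, Fin.coe_natAdd]
    omega

lemma punshift_joinFun {m' m n' n : ℕ} (φ : Fin (m'+1) → Fin (m+1)) (ψ : Fin (n'+1) → Fin (n+1))
    (i : Fin (m'+1+n'+1)) (h : m' < (i : ℕ)) :
    punshift m n (joinFun φ ψ i) = ψ (punshift m' n' i) := by
  unfold joinFun
  rw [dif_neg (by omega)]
  show punshift m n _ = _
  unfold punshift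
  apply Fin.ext
  simp only [Fin.coe_castLE, Fin.coe_natAdd]
  omega

lemma card_filter_le_add {N : ℕ} (s : Finset (Fin N)) (k : ℕ) :
    (s.filter (fun i : Fin N => (i:ℕ) ≤ k)).card +
      (s.filter (fun i : Fin N => k < (i:ℕ))).card = s.card := by
  have h : Finset.filter (fun i : Fin N => k < (i:ℕ)) s
      = Finset.filter (fun i : Fin N => ¬ (i:ℕ) ≤ k) s :=
    Finset.filter_congr (fun i _ => by omega)
  rw [h]
  exact Finset.card_filter_add_card_filter_not _

lemma card_image_punshift {m n : ℕ} (t : Finset (Fin (m+1+n+1)))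
    (ht : ∀ i ∈ t, m < (i:ℕ)) : (t.image (punshift m n)).card = t.card := by
  apply Finset.card_image_of_injOn
  intro a ha b hb hab
  have ha' := ht a (Finset.mem_coe.mp ha)
  have hb' := ht b (Finset.mem_coe.mp hb)
  have := congrArg Fin.val hab
  simp only [punshift] at this
  exact Fin.ext (by omega)

/-- STATEMENT 10: for all monotone maps `φ : [m'] → [m]` and `ψ : [n'] → [n]`,
`P(φ,ψ) ∘ κ_{m',n'} = κ_{m,n} ∘ c(φ⊔ψ)`. -/
theorem kap_natural {m' m n' n : ℕ}
    (φ : Fin (m'+1) →o Fin (m+1)) (ψ : Fin (n'+1) →o Fin (n+1)) :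
    (pMap ⇑φ ⇑ψ).comp (kap m' n') = (kap m n).comp (chMap (joinFun ⇑φ ⇑ψ)) := by
  apply Finsupp.lhom_ext
  intro s b
  rw [show (Finsupp.single s b : Ch (Fin (m'+1+n'+1))) = b • Finsupp.single s 1 by
        rw [Finsupp.smul_single, smul_eq_mul, mul_one],
      LinearMap.map_smul, LinearMap.map_smul]
  congr 1
  simp only [LinearMap.comp_apply, kap, chMap, kapAux, lift_single, one_smul]
  set J := joinFun (⇑φ) (⇑ψ) with hJdef
  set sL := s.filter (fun i : Fin (m'+1+n'+1) => (i:ℕ) ≤ m') with hsLdef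
  set sR := s.filter (fun i : Fin (m'+1+n'+1) => m' < (i:ℕ)) with hsRdef
  have hle : ∀ i : Fin (m'+1+n'+1), ((J i : ℕ) ≤ m) ↔ (i : ℕ) ≤ m' := joinFun_le_iff _ _
  have hgt : ∀ i : Fin (m'+1+n'+1), (m < (J i : ℕ)) ↔ m' < (i : ℕ) := by
    intro i
    have := hle i
    omega
  have hfL : (s.image J).filter (fun i : Fin (m+1+n+1) => (i:ℕ) ≤ m) = sL.image J := by
    rw [Finset.filter_image, hsLdef]
    congr 1
    exact Finset.filter_congr (fun i _ => by simpa using hle i)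
  have hfR : (s.image J).filter (fun i : Fin (m+1+n+1) => m < (i:ℕ)) = sR.image J := by
    rw [Finset.filter_image, hsRdef]
    congr 1
    exact Finset.filter_congr (fun i _ => by simpa using hgt i)
  have hcard : sL.card + sR.card = s.card := card_filter_le_add s m'
  have hicard := card_filter_le_add (s.image J) m
  rw [hfL, hfR] at hicard
  have h1L := Finset.card_image_le (s := sL) (f := J)
  have h1R := Finset.card_image_le (s := sR) (f := J)
  have hinj : ((s.image J).card = s.card) ↔
      ((sL.image J).card = sL.card ∧ (sR.image J).card = sR.card) := by omega
  have hmemR : ∀ i ∈ sR, m' < (i:ℕ) := fun i hi => (Finset.mem_filter.mp hi).2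
  have hmemRJ : ∀ i ∈ sR.image J, m < (i:ℕ) := by
    intro i hi
    obtain ⟨a, ha, rfl⟩ := Finset.mem_image.mp hi
    exact (hgt a).mpr (hmemR a ha)
  have htR : (sR.image (punshift m' n')).card = sR.card := by
    apply Finset.card_image_of_injOn
    intro a ha b hb hab
    have ha' := hmemR a (Finset.mem_coe.mp ha)
    have hb' := hmemR b (Finset.mem_coe.mp hb)
    have := congrArg Fin.val hab
    simp only [punshift] at this
    exact Fin.ext (by omega)
  have himg : (sR.image (punshift m' n')).image ⇑ψ = (sR.image J).image (punshift m n) := by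
    rw [Finset.image_image, Finset.image_image]
    apply Finset.image_congr
    intro i hi
    exact (punshift_joinFun (⇑φ) (⇑ψ) i (hmemR i (Finset.mem_coe.mp hi))).symm
  have himcard : ((sR.image (punshift m' n')).image ⇑ψ).card = (sR.image J).card := by
    rw [himg, card_image_punshift _ hmemRJ]
  by_cases h2 : 2 ≤ sL.card
  · rw [if_pos h2]
    simp only [pMap, lift_single, one_smul]
    rw [← hJdef]
    by_cases hi : (s.image J).card = s.card
    · rw [if_pos hi, if_pos hi, lift_single, one_smul]
      have hc : 2 ≤ ((s.image J).filter (fun i : Fin (m+1+n+1) => (i:ℕ) ≤ m)).card := by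
        rw [hfL, (hinj.mp hi).1]; exact h2
      simp only [kapAux]
      rw [if_pos hc]
    · rw [if_neg hi, if_neg hi, map_zero]
  · rw [if_neg h2]
    by_cases h1 : sL.card = 1
    · rw [if_pos h1]
      have hsing : (sL.image J).card = 1 := by
        obtain ⟨a, ha⟩ := Finset.card_eq_one.mp h1
        rw [ha, Finset.image_singleton, Finset.card_singleton]
      by_cases hi : (s.image J).card = s.card
      · rw [if_pos hi, lift_single, one_smul]
        have hnot2 : ¬ 2 ≤ ((s.image J).filter (fun i : Fin (m+1+n+1) => (i:ℕ) ≤ m)).card := by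
          rw [hfL, hsing]; omega
        have hcL : ((s.image J).filter (fun i : Fin (m+1+n+1) => (i:ℕ) ≤ m)).card = 1 := by
          rw [hfL]; exact hsing
        simp only [kapAux]
        rw [if_neg hnot2, if_pos hcL, hfR]
        by_cases hne : sR.Nonempty
        · rw [if_pos hne, if_pos (hne.image J), map_add]
          simp only [pMap, lift_single, one_smul]
          rw [← hJdef, if_pos hi,
            if_pos (show ((sR.image (punshift m' n')).image ⇑ψ).card
                = (sR.image (punshift m' n')).card by
              rw [himcard, htR]; exact (hinj.mp hi).2),
            himg]
        · rw [if_neg hne, if_neg (fun h => hne (Finset.Nonempty.of_image h)),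
            add_zero, add_zero]
          simp only [pMap, lift_single, one_smul]
          rw [← hJdef, if_pos hi]
      · rw [if_neg hi, map_zero]
        have hRne : (sR.image J).card ≠ sR.card := fun h => hi (hinj.mpr ⟨by omega, h⟩)
        by_cases hne : sR.Nonempty
        · rw [if_pos hne, map_add]
          simp only [pMap, lift_single, one_smul]
          rw [← hJdef, if_neg hi,
            if_neg (show ¬ ((sR.image (punshift m' n')).image ⇑ψ).card
                = (sR.image (punshift m' n')).card by rw [himcard, htR]; exact hRne)]
          simp
        · rw [if_neg hne, add_zero]
          simp only [pMap, lift_single, one_smul]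
          rw [← hJdef, if_neg hi]
    · rw [if_neg h1]
      have hL0 : sL.card = 0 := by omega
      have hLimg : (sL.image J).card = 0 := by omega
      have hmemS : ∀ i ∈ s, m' < (i:ℕ) := by
        intro i hi
        by_contra hc
        have : i ∈ sL := Finset.mem_filter.mpr ⟨hi, by omega⟩
        rw [Finset.card_eq_zero.mp hL0] at this
        exact absurd this (Finset.notMem_empty i)
      have hsReq : sR = s := by
        rw [hsRdef]
        exact Finset.filter_eq_self.mpr hmemS
      rw [hsReq] at htR himcard himg
      have hcond : ((s.image (punshift m' n')).image ⇑ψ).card = (s.image (punshift m' n')).card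
          ↔ (s.image J).card = s.card := by rw [himcard, htR]
      by_cases hi : (s.image J).card = s.card
      · rw [if_pos hi, lift_single, one_smul]
        have hnot2 : ¬ 2 ≤ ((s.image J).filter (fun i : Fin (m+1+n+1) => (i:ℕ) ≤ m)).card := by
          rw [hfL]; omega
        have hnot1 : ¬ ((s.image J).filter (fun i : Fin (m+1+n+1) => (i:ℕ) ≤ m)).card = 1 := by
          rw [hfL]; omega
        simp only [kapAux]
        rw [if_neg hnot2, if_neg hnot1]
        simp only [pMap, lift_single, one_smul]
        rw [if_pos (hcond.mpr hi), himg]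
      · rw [if_neg hi, map_zero]
        simp only [pMap, lift_single, one_smul]
        rw [if_neg (fun h => hi (hcond.mp h))]

end
end

section
/- For every monotone map ψ : [n'] → [n], letting ψ' := id_{[m]} ⊔ ψ : [m+1+n'] → [m+1+n], one has f_n ∘ c(ψ') = c(ψ') ∘ f_{n'} as graded maps C(m+1+n') → C(m+1+n). -/
/-!
We represent the (augmented) normalized chain complex `C(N)` of the standard `N`-simplex by the
free abelian group on the finite subsets of `{0,…,N}`, a subset of cardinality `p+1` standing for
the strictly increasing `(p+1)`-tuple of its elements (a `p`-chain); the differential is the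
alternating sum of the tuples obtained by deleting one entry (and vanishes on `0`-chains), and
the augmentation sends every `0`-chain basis element to `1` (and vanishes in higher degrees).
-/

noncomputable section

/-- the element `m` of `{0,…,m+1+n}`. -/
def elM (m n : ℕ) : Fin (m+1+n+1) := ⟨m, by omega⟩

/-- `f_n` on a basis tuple `(i₀ < … < i_p)`, following the case analysis of the paper
(expressed via the sets of entries `< m` and `> m`):
`f_n = id` if `i_p ≤ m` or `m ≤ i₀`; `f_n(i₀,i₁) = (i₀,m) + (m,i₁)` if `p = 1` and
`i₀ < m < i₁`; `f_n(i₀,…,i_p) = (m,i₁,…,i_p)` if `p > 1` and `i₀ < m < i₁`;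
`f_n(i₀,…,i_p) = (i₀,…,i_{p−1},m)` if `p > 1` and `i_{p−1} < m < i_p`; `f_n = 0` otherwise
(i.e. if `i₁ ≤ m ≤ i_{p−1}`). -/
def fnAux (m n : ℕ) (s : Finset (Fin (m+1+n+1))) : Ch (Fin (m+1+n+1)) :=
  let M := elM m n
  let lo := s.filter (fun i => i < M)
  let hi := s.filter (fun i => M < i)
  if lo.card = 0 ∨ hi.card = 0 then Finsupp.single s 1
  else if lo.card = 1 ∧ hi.card = 1 ∧ M ∉ s then
    Finsupp.single (insert M lo) 1 + Finsupp.single (insert M hi) 1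
  else if lo.card = 1 ∧ 2 ≤ hi.card ∧ M ∉ s then Finsupp.single (insert M hi) 1
  else if 2 ≤ lo.card ∧ hi.card = 1 ∧ M ∉ s then Finsupp.single (insert M lo) 1
  else 0

/-- the graded `ℤ`-linear endomorphism `f_n` of `C(m+1+n)`. -/
def fN (m n : ℕ) : Ch (Fin (m+1+n+1)) →ₗ[ℤ] Ch (Fin (m+1+n+1)) :=
  Finsupp.lift _ ℤ _ (fnAux m n)

variable {m n' n : ℕ}

private lemma joinFun_val (ψ : Fin (n'+1) →o Fin (n+1)) (i : Fin (m+1+n'+1)) :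
    ((joinFun (id : Fin (m+1) → Fin (m+1)) ⇑ψ i) : ℕ)
      = if h : (i:ℕ) ≤ m then (i:ℕ)
        else m+1+(ψ ⟨(i:ℕ)-(m+1), by have := i.isLt; omega⟩ : ℕ) := by
  unfold joinFun
  split_ifs with h <;> simp

private lemma gval_le (ψ : Fin (n'+1) →o Fin (n+1)) (i : Fin (m+1+n'+1)) :
    joinFun (id : Fin (m+1) → Fin (m+1)) ⇑ψ i ≤ elM m n ↔ i ≤ elM m n' := by
  rw [Fin.le_def, Fin.le_def, joinFun_val ψ i]
  show _ ≤ m ↔ _ ≤ m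
  split_ifs <;> omega

private lemma gval_lt (ψ : Fin (n'+1) →o Fin (n+1)) (i : Fin (m+1+n'+1)) :
    joinFun (id : Fin (m+1) → Fin (m+1)) ⇑ψ i < elM m n ↔ i < elM m n' := by
  rw [Fin.lt_def, Fin.lt_def, joinFun_val ψ i]
  show _ < m ↔ _ < m
  split_ifs <;> omega

private lemma gval_gt (ψ : Fin (n'+1) →o Fin (n+1)) (i : Fin (m+1+n'+1)) :
    elM m n < joinFun (id : Fin (m+1) → Fin (m+1)) ⇑ψ i ↔ elM m n' < i := by
  rw [Fin.lt_def, Fin.lt_def, joinFun_val ψ i]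
  show m < _ ↔ m < _
  split_ifs <;> omega

private lemma gval_eq (ψ : Fin (n'+1) →o Fin (n+1)) (i : Fin (m+1+n'+1)) :
    joinFun (id : Fin (m+1) → Fin (m+1)) ⇑ψ i = elM m n ↔ i = elM m n' := by
  rw [Fin.ext_iff, Fin.ext_iff, joinFun_val ψ i]
  show _ = m ↔ _ = m
  split_ifs <;> omega

private lemma ginj (ψ : Fin (n'+1) →o Fin (n+1)) (i j : Fin (m+1+n'+1))
    (hi : (i:ℕ) ≤ m) (hj : (j:ℕ) ≤ m)
    (h : joinFun (id : Fin (m+1) → Fin (m+1)) ⇑ψ i = joinFun (id : Fin (m+1) → Fin (m+1)) ⇑ψ j) :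
    i = j := by
  apply Fin.ext
  have := congrArg Fin.val h
  rwa [joinFun_val ψ i, joinFun_val ψ j, dif_pos hi, dif_pos hj] at this

private lemma chMap_single {α β : Type} [DecidableEq β] (g : α → β) (s : Finset α) :
    chMap g (Finsupp.single s 1)
      = if (s.image g).card = s.card then Finsupp.single (s.image g) (1:ℤ) else 0 := by
  simp [chMap, Finsupp.lift_apply, Finsupp.sum_single_index]

private lemma fN_single (m n : ℕ) (s : Finset (Fin (m+1+n+1))) :
    fN m n (Finsupp.single s 1) = fnAux m n s := by
  simp [fN, Finsupp.lift_apply, Finsupp.sum_single_index]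

private lemma key_s11 (ψ : Fin (n'+1) →o Fin (n+1)) (s : Finset (Fin (m+1+n'+1))) :
    fN m n (chMap (joinFun (id : Fin (m+1) → Fin (m+1)) ⇑ψ) (Finsupp.single s 1)) =
      chMap (joinFun (id : Fin (m+1) → Fin (m+1)) ⇑ψ) (fnAux m n' s) := by
  classical
  set gg : Fin (m+1+n'+1) → Fin (m+1+n+1) := joinFun (id : Fin (m+1) → Fin (m+1)) ⇑ψ
    with hggdef
  have h1 : (s.image gg).filter (fun i => i < elM m n)
      = (s.filter (fun i => i < elM m n')).image gg := by
    ext b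
    simp only [Finset.mem_filter, Finset.mem_image]
    constructor
    · rintro ⟨⟨a, ha, rfl⟩, hb⟩
      exact ⟨a, ⟨ha, (gval_lt ψ a).mp hb⟩, rfl⟩
    · rintro ⟨a, ⟨ha, ha'⟩, rfl⟩
      exact ⟨⟨a, ha, rfl⟩, (gval_lt ψ a).mpr ha'⟩
  have h2 : (s.image gg).filter (fun i => elM m n < i)
      = (s.filter (fun i => elM m n' < i)).image gg := by
    ext b
    simp only [Finset.mem_filter, Finset.mem_image]
    constructor
    · rintro ⟨⟨a, ha, rfl⟩, hb⟩
      exact ⟨a, ⟨ha, (gval_gt ψ a).mp hb⟩, rfl⟩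
    · rintro ⟨a, ⟨ha, ha'⟩, rfl⟩
      exact ⟨⟨a, ha, rfl⟩, (gval_gt ψ a).mpr ha'⟩
  have hfle : (s.image gg).filter (fun i => i ≤ elM m n)
      = (s.filter (fun i => i ≤ elM m n')).image gg := by
    ext b
    simp only [Finset.mem_filter, Finset.mem_image]
    constructor
    · rintro ⟨⟨a, ha, rfl⟩, hb⟩
      exact ⟨a, ⟨ha, (gval_le ψ a).mp hb⟩, rfl⟩
    · rintro ⟨a, ⟨ha, ha'⟩, rfl⟩
      exact ⟨⟨a, ha, rfl⟩, (gval_le ψ a).mpr ha'⟩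
  have h3 : elM m n ∈ s.image gg ↔ elM m n' ∈ s := by
    simp only [Finset.mem_image]
    constructor
    · rintro ⟨a, ha, hEq⟩
      rwa [(gval_eq ψ a).mp hEq] at ha
    · intro h
      exact ⟨_, h, (gval_eq ψ _).mpr rfl⟩
  have hinjle : ∀ u : Finset (Fin (m+1+n'+1)), (∀ a ∈ u, a ≤ elM m n') →
      (u.image gg).card = u.card := by
    intro u hu
    apply Finset.card_image_of_injOn
    intro a ha b hb hab
    exact ginj ψ a b (hu a ha) (hu b hb) hab
  have hcardlo : ((s.filter (fun i => i < elM m n')).image gg).card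
      = (s.filter (fun i => i < elM m n')).card :=
    hinjle _ (fun a ha => le_of_lt (Finset.mem_filter.mp ha).2)
  have hcardle : ((s.filter (fun i => i ≤ elM m n')).image gg).card
      = (s.filter (fun i => i ≤ elM m n')).card :=
    hinjle _ (fun a ha => (Finset.mem_filter.mp ha).2)
  have hsplits : s.card = (s.filter (fun i => i ≤ elM m n')).card
      + (s.filter (fun i => elM m n' < i)).card := by
    have hh := Finset.card_filter_add_card_filter_not
      (p := fun i => i ≤ elM m n') (s := s)
    rw [show s.filter (fun a => ¬ a ≤ elM m n') = s.filter (fun i => elM m n' < i) from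
      Finset.filter_congr (fun a _ => by simp [not_le])] at hh
    omega
  have hsplitt : (s.image gg).card = (s.filter (fun i => i ≤ elM m n')).card
      + ((s.filter (fun i => elM m n' < i)).image gg).card := by
    rw [← Finset.card_filter_add_card_filter_not (p := fun i => i ≤ elM m n)
      (s := s.image gg)]
    congr 1
    · rw [hfle, hcardle]
    · rw [show (s.image gg).filter (fun a => ¬ a ≤ elM m n)
          = (s.image gg).filter (fun i => elM m n < i) from
        Finset.filter_congr (fun a _ => by simp [not_le]), h2]
  have h6 : ((s.image gg).card = s.card) ↔
      ((s.filter (fun i => elM m n' < i)).image gg).card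
        = (s.filter (fun i => elM m n' < i)).card := by
    omega
  have hgM : gg (elM m n') = elM m n := (gval_eq ψ _).mpr rfl
  have h8 : (insert (elM m n') (s.filter (fun i => i < elM m n'))).image gg
      = insert (elM m n) ((s.filter (fun i => i < elM m n')).image gg) := by
    rw [Finset.image_insert, hgM]
  have h9 : (insert (elM m n') (s.filter (fun i => elM m n' < i))).image gg
      = insert (elM m n) ((s.filter (fun i => elM m n' < i)).image gg) := by
    rw [Finset.image_insert, hgM]
  have hMnotlo' : elM m n ∉ (s.filter (fun i => i < elM m n')).image gg := by
    simp only [Finset.mem_image]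
    rintro ⟨a, ha, hEq⟩
    have h := (Finset.mem_filter.mp ha).2
    rw [(gval_eq ψ a).mp hEq] at h
    exact lt_irrefl _ h
  have hMnothi' : elM m n ∉ (s.filter (fun i => elM m n' < i)).image gg := by
    simp only [Finset.mem_image]
    rintro ⟨a, ha, hEq⟩
    have h := (Finset.mem_filter.mp ha).2
    rw [(gval_eq ψ a).mp hEq] at h
    exact lt_irrefl _ h
  have h10 : ((insert (elM m n') (s.filter (fun i => i < elM m n'))).image gg).card
      = (s.filter (fun i => i < elM m n')).card + 1 := by
    rw [h8, Finset.card_insert_of_notMem hMnotlo', hcardlo]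
  have h11 : ((insert (elM m n') (s.filter (fun i => elM m n' < i))).image gg).card
      = ((s.filter (fun i => elM m n' < i)).image gg).card + 1 := by
    rw [h9, Finset.card_insert_of_notMem hMnothi']
  have hMnotlo : elM m n' ∉ s.filter (fun i => i < elM m n') := by
    simp [Finset.mem_filter]
  have hMnothi : elM m n' ∉ s.filter (fun i => elM m n' < i) := by
    simp [Finset.mem_filter]
  have hcardloins : (insert (elM m n') (s.filter (fun i => i < elM m n'))).card
      = (s.filter (fun i => i < elM m n')).card + 1 :=
    Finset.card_insert_of_notMem hMnotlo
  have hcardhiins : (insert (elM m n') (s.filter (fun i => elM m n' < i))).card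
      = (s.filter (fun i => elM m n' < i)).card + 1 :=
    Finset.card_insert_of_notMem hMnothi
  have hhi1 : (s.filter (fun i => elM m n' < i)).card = 1 →
      ((s.filter (fun i => elM m n' < i)).image gg).card = 1 := by
    intro hu
    obtain ⟨a, ha⟩ := Finset.card_eq_one.mp hu
    rw [ha]
    simp
  have hcondlo : ((insert (elM m n') (s.filter (fun i => i < elM m n'))).image gg).card
      = (insert (elM m n') (s.filter (fun i => i < elM m n'))).card := by
    rw [h10, hcardloins]
  have hcondhi : ((((insert (elM m n') (s.filter (fun i => elM m n' < i))).image gg).card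
        = (insert (elM m n') (s.filter (fun i => elM m n' < i))).card) ↔
      ((s.filter (fun i => elM m n' < i)).image gg).card
        = (s.filter (fun i => elM m n' < i)).card) := by
    rw [h11, hcardhiins]
    omega
  rw [chMap_single]
  rw [apply_ite (fN m n), map_zero, fN_single]
  by_cases hA : (s.filter (fun i => i < elM m n')).card = 0
      ∨ (s.filter (fun i => elM m n' < i)).card = 0
  · have hfs : fnAux m n' s = Finsupp.single s 1 := by
      simp only [fnAux]
      rw [if_pos hA]
    rw [hfs, chMap_single]
    by_cases hts : (s.image gg).card = s.card
    · rw [if_pos hts, if_pos hts]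
      have hfs2 : fnAux m n (s.image gg) = Finsupp.single (s.image gg) 1 := by
        simp only [fnAux]
        rw [if_pos]
        rcases hA with h | h
        · left; rw [h1, hcardlo, h]
        · right; rw [h2, h6.mp hts, h]
      rw [hfs2]
    · rw [if_neg hts, if_neg hts]
  · have hA' := not_or.mp hA
    by_cases hB : (s.filter (fun i => i < elM m n')).card = 1
        ∧ (s.filter (fun i => elM m n' < i)).card = 1 ∧ elM m n' ∉ s
    · have hhic : ((s.filter (fun i => elM m n' < i)).image gg).card
          = (s.filter (fun i => elM m n' < i)).card := by
        rw [hhi1 hB.2.1, hB.2.1]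
      have hts : (s.image gg).card = s.card := h6.mpr hhic
      have hM't : elM m n ∉ s.image gg := fun h => hB.2.2 (h3.mp h)
      have hfs : fnAux m n' s
          = Finsupp.single (insert (elM m n') (s.filter (fun i => i < elM m n'))) 1
            + Finsupp.single (insert (elM m n') (s.filter (fun i => elM m n' < i))) 1 := by
        simp only [fnAux]
        rw [if_neg hA, if_pos hB]
      rw [hfs, map_add, chMap_single, chMap_single,
        if_pos hcondlo,
        if_pos (hcondhi.mpr hhic),
        if_pos hts]
      have hfs2 : fnAux m n (s.image gg)
          = Finsupp.single (insert (elM m n) ((s.image gg).filter (fun i => i < elM m n))) 1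
            + Finsupp.single (insert (elM m n) ((s.image gg).filter (fun i => elM m n < i))) 1 := by
        simp only [fnAux]
        rw [if_neg, if_pos]
        · exact ⟨by rw [h1, hcardlo, hB.1], by rw [h2, hhic, hB.2.1], hM't⟩
        · rintro (h | h)
          · rw [h1, hcardlo] at h; exact hA'.1 h
          · rw [h2, hhic] at h; exact hA'.2 h
      rw [hfs2, h1, h2, h8, h9]
    · by_cases hC : (s.filter (fun i => i < elM m n')).card = 1
          ∧ 2 ≤ (s.filter (fun i => elM m n' < i)).card ∧ elM m n' ∉ s
      · have hfs : fnAux m n' s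
            = Finsupp.single (insert (elM m n') (s.filter (fun i => elM m n' < i))) 1 := by
          simp only [fnAux]
          rw [if_neg hA, if_neg hB, if_pos hC]
        rw [hfs, chMap_single]
        by_cases hts : (s.image gg).card = s.card
        · have hhic := h6.mp hts
          rw [if_pos (hcondhi.mpr hhic), if_pos hts]
          have hfs2 : fnAux m n (s.image gg)
              = Finsupp.single (insert (elM m n)
                  ((s.image gg).filter (fun i => elM m n < i))) 1 := by
            simp only [fnAux]
            rw [if_neg, if_neg, if_pos]
            · exact ⟨by rw [h1, hcardlo, hC.1], by rw [h2, hhic]; exact hC.2.1,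
                fun h => hC.2.2 (h3.mp h)⟩
            · rintro ⟨-, hh, -⟩
              rw [h2, hhic] at hh
              omega
            · rintro (h | h)
              · rw [h1, hcardlo] at h; exact hA'.1 h
              · rw [h2, hhic] at h; exact hA'.2 h
          rw [hfs2, h2, h9]
        · rw [if_neg hts, if_neg]
          intro h
          exact hts (h6.mpr (hcondhi.mp h))
      · by_cases hD : 2 ≤ (s.filter (fun i => i < elM m n')).card
            ∧ (s.filter (fun i => elM m n' < i)).card = 1 ∧ elM m n' ∉ s
        · have hhic : ((s.filter (fun i => elM m n' < i)).image gg).card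
              = (s.filter (fun i => elM m n' < i)).card := by
            rw [hhi1 hD.2.1, hD.2.1]
          have hts : (s.image gg).card = s.card := h6.mpr hhic
          have hfs : fnAux m n' s
              = Finsupp.single (insert (elM m n') (s.filter (fun i => i < elM m n'))) 1 := by
            simp only [fnAux]
            rw [if_neg hA, if_neg hB, if_neg hC, if_pos hD]
          rw [hfs, chMap_single, if_pos hcondlo, if_pos hts]
          have hfs2 : fnAux m n (s.image gg)
              = Finsupp.single (insert (elM m n)
                  ((s.image gg).filter (fun i => i < elM m n))) 1 := by
            simp only [fnAux]
            rw [if_neg, if_neg, if_neg, if_pos]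
            · exact ⟨by rw [h1, hcardlo]; exact hD.1, by rw [h2, hhic, hD.2.1],
                fun h => hD.2.2 (h3.mp h)⟩
            · rintro ⟨hh, -, -⟩
              rw [h1, hcardlo] at hh
              omega
            · rintro ⟨hh, -, -⟩
              rw [h1, hcardlo] at hh
              omega
            · rintro (h | h)
              · rw [h1, hcardlo] at h; exact hA'.1 h
              · rw [h2, hhic] at h; exact hA'.2 h
          rw [hfs2, h1, h8]
        · have hfs : fnAux m n' s = 0 := by
            simp only [fnAux]
            rw [if_neg hA, if_neg hB, if_neg hC, if_neg hD]
          rw [hfs, map_zero]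
          by_cases hts : (s.image gg).card = s.card
          · have hhic := h6.mp hts
            rw [if_pos hts]
            have hfs2 : fnAux m n (s.image gg) = 0 := by
              simp only [fnAux]
              rw [if_neg, if_neg, if_neg, if_neg]
              · rintro ⟨ha, hb, hc⟩
                rw [h1, hcardlo] at ha
                rw [h2, hhic] at hb
                exact hD ⟨ha, hb, fun h => hc (h3.mpr h)⟩
              · rintro ⟨ha, hb, hc⟩
                rw [h1, hcardlo] at ha
                rw [h2, hhic] at hb
                exact hC ⟨ha, hb, fun h => hc (h3.mpr h)⟩
              · rintro ⟨ha, hb, hc⟩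
                rw [h1, hcardlo] at ha
                rw [h2, hhic] at hb
                exact hB ⟨ha, hb, fun h => hc (h3.mpr h)⟩
              · rintro (h | h)
                · rw [h1, hcardlo] at h; exact hA'.1 h
                · rw [h2, hhic] at h; exact hA'.2 h
            rw [hfs2]
          · rw [if_neg hts]


/-- STATEMENT 12: for every monotone `ψ : [n'] → [n]`, with `ψ' := id_{[m]} ⊔ ψ`, one has
`f_n ∘ c(ψ') = c(ψ') ∘ f_{n'}`. -/
theorem fN_natural {n' : ℕ} (m n : ℕ) (ψ : Fin (n'+1) →o Fin (n+1)) :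
    (fN m n).comp (chMap (joinFun (id : Fin (m+1) → Fin (m+1)) ⇑ψ)) =
      (chMap (joinFun (id : Fin (m+1) → Fin (m+1)) ⇑ψ)).comp (fN m n') := by
  apply Finsupp.lhom_ext
  intro a b
  have hb : (Finsupp.single a b : Ch (Fin (m+1+n'+1))) = b • Finsupp.single a 1 := by
    rw [Finsupp.smul_single, smul_eq_mul, mul_one]
  simp only [LinearMap.comp_apply, hb, map_smul]
  rw [fN_single, key_s11 ψ a]

end
end
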